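/- Let X be an S-open subset of a product ∏_{t∈T} X_t of sets and let (Y,d) be a metric space. Then a mapping f : X → Y is continuous with respect to the S-topology on X if and only if for every topology T' on X the mapping f : (X,T') → Y is strongly separately continuous. -/

import Mathlib

open Function Filter Topology

/-- `Sigma1 x` (σ₁(x)): the set of points differing from `x` in at most one coordinate. -/
def Sigma1 {T : Type*} {X : T → Type*} (x : ∀ t, X t) : Set (∀ t, X t) :=
  {y | {t | y t ≠ x t}.Subsingleton}

/-- A set `A` is `S`-open if `σ₁(x) ⊆ A` for every `x ∈ A`. -/
def SOpen {T : Type*} {X : T → Type*} (A : Set (∀ t, X t)) : Prop :=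
  ∀ x ∈ A, Sigma1 x ⊆ A

theorem update_mem {T : Type*} [DecidableEq T] {X : T → Type*} {A : Set (∀ t, X t)}
    (hA : SOpen A) {x : ∀ t, X t} (hx : x ∈ A) (t : T) (v : X t) :
    Function.update x t v ∈ A := by
  apply hA x hx
  intro s hs s' hs'
  simp only [Set.mem_setOf_eq] at hs hs'
  have h1 : s = t := by
    by_contra h
    exact hs (Function.update_of_ne h v x)
  have h2 : s' = t := by
    by_contra h
    exact hs' (Function.update_of_ne h v x)
  rw [h1, h2]

/-- The point `x_t^v`: `x` with its `t`-th coordinate replaced by `v`, as an element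
of the `S`-open set `A`. -/
def updPt {T : Type*} [DecidableEq T] {X : T → Type*} {A : Set (∀ t, X t)}
    (hA : SOpen A) (x : ↥A) (t : T) (v : X t) : ↥A :=
  ⟨Function.update x.1 t v, update_mem hA x.2 t v⟩

/-- `f : (A, T') → Y` is strongly separately continuous at `a` (w.r.t. every variable):
for each `t`, `lim_{x → a} dist (f x) (f (x_t^a)) = 0`, the limit taken in `T'`. -/
def StrSepContAt {T : Type*} [DecidableEq T] {X : T → Type*} {A : Set (∀ t, X t)}
    (hA : SOpen A) (T' : TopologicalSpace ↥A) {Y : Type*} [MetricSpace Y]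
    (f : ↥A → Y) (a : ↥A) : Prop :=
  ∀ t : T, Filter.Tendsto (fun x : ↥A => dist (f x) (f (updPt hA x t (a.1 t))))
    (@nhds _ T' a) (nhds 0)

/-- The `S`-topology on the product `∀ t, X t`, whose open sets are the `S`-open sets. -/
def sTop (T : Type*) (X : T → Type*) : TopologicalSpace (∀ t, X t) where
  IsOpen := SOpen
  isOpen_univ := by intro x _ y _; trivial
  isOpen_inter := by
    intro A B hA hB x hx y hy
    exact ⟨hA x hx.1 hy, hB x hx.2 hy⟩
  isOpen_sUnion := by
    intro S hS x hx y hy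
    obtain ⟨A, hAS, hxA⟩ := hx
    exact ⟨A, hAS, hS A hAS x hxA hy⟩

/-- `f` is continuous with respect to the S-topology on an S-open set `A` iff for every
topology `T'` on `A`, `f : (A, T') → Y` is strongly separately continuous. -/
theorem continuous_sTop_iff_strSepCont {T : Type*} [DecidableEq T] {X : T → Type*}
    {A : Set (∀ t, X t)} (hA : SOpen A) {Y : Type*} [MetricSpace Y] (f : ↥A → Y) :
    @Continuous _ _ (TopologicalSpace.induced Subtype.val (sTop T X)) _ f ↔
      ∀ (T' : TopologicalSpace ↥A) (a : ↥A), StrSepContAt hA T' f a := by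
  constructor
  · intro hf
    -- from continuity, `f` is invariant under single-coordinate updates
    have key : ∀ (x : ↥A) (t : T) (v : X t), f (updPt hA x t v) = f x := by
      intro x t v
      apply eq_of_forall_dist_le
      intro ε hε
      letI : TopologicalSpace (∀ t, X t) := sTop T X
      letI : TopologicalSpace ↥A := (sTop T X).induced Subtype.val
      have hball : IsOpen (f ⁻¹' Metric.ball (f x) ε) :=
        hf.isOpen_preimage _ Metric.isOpen_ball
      obtain ⟨V, hV', hVU⟩ := isOpen_induced_iff.mp hball
      have hV : SOpen V := hV'
      have hxV : x.1 ∈ V := by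
        have : x ∈ Subtype.val ⁻¹' V := hVU ▸ (by simp [hε] : x ∈ f ⁻¹' Metric.ball (f x) ε)
        exact this
      have hmem : (updPt hA x t v).1 ∈ V := by
        apply hV x.1 hxV
        intro s hs s' hs'
        simp only [Set.mem_setOf_eq] at hs hs'
        have h1 : s = t := by
          by_contra h; exact hs (Function.update_of_ne h v x.1)
        have h2 : s' = t := by
          by_contra h; exact hs' (Function.update_of_ne h v x.1)
        rw [h1, h2]
      have : updPt hA x t v ∈ f ⁻¹' Metric.ball (f x) ε := hVU ▸ hmem
      exact le_of_lt (by simpa [dist_comm] using this)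
    intro T' a t
    have hconst : (fun x : ↥A => dist (f x) (f (updPt hA x t (a.1 t)))) = fun _ => 0 := by
      funext x; rw [key x t]; simp
    rw [hconst]
    exact tendsto_const_nhds
  · intro h
    -- from the indiscrete topology, `f` is invariant under single-coordinate updates
    have key : ∀ (x : ↥A) (t : T) (v : X t), f (updPt hA x t v) = f x := by
      intro x t v
      have ha := h ⊤ (updPt hA x t v) t
      have hpure : Filter.Tendsto (fun x' : ↥A =>
          dist (f x') (f (updPt hA x' t ((updPt hA x t v).1 t)))) (pure x) (nhds 0) :=
        ha.mono_left (by rw [_root_.nhds_top]; exact le_top)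
      have h0 : dist (f x) (f (updPt hA x t ((updPt hA x t v).1 t))) = 0 := by
        have := hpure
        rw [Filter.tendsto_pure_left] at this
        exact eq_of_forall_dist_le fun ε hε => le_of_lt (by
          have := this (Metric.ball 0 ε) (Metric.ball_mem_nhds 0 hε)
          simpa [Real.dist_eq, abs_of_nonneg dist_nonneg] using this)
      have hcoord : (updPt hA x t v).1 t = v := Function.update_self t v x.1
      rw [hcoord] at h0
      exact (eq_of_dist_eq_zero h0).symm
    letI : TopologicalSpace (∀ t, X t) := sTop T X
    letI : TopologicalSpace ↥A := (sTop T X).induced Subtype.val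
    rw [continuous_def]
    intro W hW
    rw [isOpen_induced_iff]
    refine ⟨Subtype.val '' (f ⁻¹' W), ?_, Set.preimage_image_eq _ Subtype.val_injective⟩
    show SOpen _
    rintro z ⟨x, hxU, rfl⟩ y hy
    by_cases hyx : y = x.1
    · exact ⟨x, hxU, hyx.symm⟩
    · obtain ⟨t, ht⟩ : ∃ t, y t ≠ x.1 t := by
        by_contra hc; push_neg at hc; exact hyx (funext hc)
      have hyu : y = Function.update x.1 t (y t) := by
        funext s
        by_cases hst : s = t
        · subst hst; simp
        · rw [Function.update_of_ne hst]
          by_contra hne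
          exact hst (hy hne ht)
      refine ⟨updPt hA x t (y t), ?_, ?_⟩
      · show f _ ∈ W; rw [key]; exact hxU
      · exact hyu.symm
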